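/- (Theorem on the average run length) Let (ξ_n)_{n≥1} be i.i.d. real-valued random variables satisfying E[e^{ξ_1}] ≤ 1. For τ > 0 define the CUSUM-type stopping time T = inf{n ≥ 1 : max_{1≤k≤n} Σ_{i=k}^n ξ_i ≥ τ}, with inf ∅ = +∞. Then E[T] ≥ e^{τ}, where the expectation is taken in [0, ∞]. -/

import Mathlib

open MeasureTheory Real ProbabilityTheory Filter Topology
open scoped ProbabilityTheory ENNReal

/-- The CUSUM-type stopping time `T = inf {n ≥ 1 : max_{1≤k≤n} ∑_{i=k}^n ξ_i ≥ τ}`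
(with `inf ∅ = +∞`), as an `ℝ≥0∞`-valued random time. Here `ξ i` (for `i : ℕ`)
denotes the `(i+1)`-st increment, so that the inner sum `∑_{i=k}^n ξ_i` of the paper
becomes `∑_{i ∈ Ico (k-1) n} ξ i` with `k - 1 < n`. -/
noncomputable def cusumTime {Ω : Type*} (ξ : ℕ → Ω → ℝ) (τ : ℝ) (ω : Ω) : ℝ≥0∞ :=
  sInf {t : ℝ≥0∞ | ∃ n : ℕ, t = n ∧ 1 ≤ n ∧
    ∃ k : ℕ, k < n ∧ τ ≤ ∑ i ∈ Finset.Ico k n, ξ i ω}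

namespace CusumProof

variable {Ω : Type*} [MeasureSpace Ω] (ξ : ℕ → Ω → ℝ) (τ : ℝ)

/-- crossing at time `n`. -/
def cross (n : ℕ) : Set Ω := {ω | ∃ k, k < n ∧ τ ≤ ∑ i ∈ Finset.Ico k n, ξ i ω}

/-- Shiryaev–Roberts statistic. -/
noncomputable def R (n : ℕ) (ω : Ω) : ℝ≥0∞ :=
  ∑ k ∈ Finset.range n, ENNReal.ofReal (Real.exp (∑ i ∈ Finset.Ico k n, ξ i ω))

/-- no crossing up to time `n`. -/
def B (n : ℕ) : Set Ω := {ω | ∀ m, m ≤ n → ω ∉ cross ξ τ m}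

variable {ξ τ}

lemma meas_cross (hmeas : ∀ n, Measurable (ξ n)) (n : ℕ) :
    MeasurableSet (cross ξ τ n) := by
  have : cross ξ τ n = ⋃ k ∈ Finset.range n, {ω | τ ≤ ∑ i ∈ Finset.Ico k n, ξ i ω} := by
    ext ω; simp [cross]
  rw [this]
  exact Finset.measurableSet_biUnion _ fun k _ =>
    measurableSet_le measurable_const (Finset.measurable_sum _ fun i _ => hmeas i)

lemma meas_B (hmeas : ∀ n, Measurable (ξ n)) (n : ℕ) :
    MeasurableSet (B ξ τ n) := by
  have : B ξ τ n = ⋂ m ∈ Set.Iic n, (cross ξ τ m)ᶜ := by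
    ext ω; simp [B]
  rw [this]
  exact MeasurableSet.biInter (Set.to_countable _) fun m _ => (meas_cross hmeas m).compl

lemma meas_R (hmeas : ∀ n, Measurable (ξ n)) (n : ℕ) : Measurable (R ξ n) :=
  Finset.measurable_sum _ fun k _ =>
    (ENNReal.measurable_ofReal.comp Real.measurable_exp).comp
      (Finset.measurable_sum _ fun i _ => hmeas i)

lemma B_antitone : Antitone (B ξ τ) := fun m n hmn ω hω m' hm' => hω m' (hm'.trans hmn)

lemma R_succ (n : ℕ) (ω : Ω) :
    R ξ (n + 1) ω = (R ξ n ω + 1) * ENNReal.ofReal (Real.exp (ξ n ω)) := by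
  unfold R
  rw [Finset.sum_range_succ]
  have hlast : ∑ i ∈ Finset.Ico n (n + 1), ξ i ω = ξ n ω := by
    simp
  have hterm : ∀ k ∈ Finset.range n,
      ENNReal.ofReal (Real.exp (∑ i ∈ Finset.Ico k (n+1), ξ i ω)) =
        ENNReal.ofReal (Real.exp (∑ i ∈ Finset.Ico k n, ξ i ω)) *
          ENNReal.ofReal (Real.exp (ξ n ω)) := by
    intro k hk
    rw [Finset.sum_Ico_succ_top (Finset.mem_range.1 hk).le, Real.exp_add,
      ENNReal.ofReal_mul (Real.exp_nonneg _)]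
  rw [Finset.sum_congr rfl hterm, ← Finset.sum_mul, hlast, add_mul, one_mul]

lemma R_ge_cross {n : ℕ} {ω : Ω} (hω : ω ∈ cross ξ τ n) :
    ENNReal.ofReal (Real.exp τ) ≤ R ξ n ω := by
  obtain ⟨k, hk, hτk⟩ := hω
  calc ENNReal.ofReal (Real.exp τ)
      ≤ ENNReal.ofReal (Real.exp (∑ i ∈ Finset.Ico k n, ξ i ω)) :=
        ENNReal.ofReal_le_ofReal (Real.exp_le_exp.2 hτk)
    _ ≤ R ξ n ω := Finset.single_le_sum (f := fun k =>
        ENNReal.ofReal (Real.exp (∑ i ∈ Finset.Ico k n, ξ i ω)))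
        (fun i _ => zero_le) (Finset.mem_range.2 hk)


/-- The indicator-weighted pre-crossing statistic is independent of the next increment. -/
lemma indep_step [IsProbabilityMeasure (ℙ : Measure Ω)]
    (hmeas : ∀ n, Measurable (ξ n))
    (hindep : iIndepFun ξ ℙ) (n : ℕ) :
    IndepFun ((B ξ τ n).indicator (fun ω => R ξ n ω + 1))
      (fun ω => ENNReal.ofReal (Real.exp (ξ n ω))) ℙ := by
  classical
  set S : Finset ℕ := Finset.range n with hS
  set T : Finset ℕ := {n} with hT
  have hST : Disjoint S T := by
    simp [hS, hT, Finset.disjoint_singleton_right]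
  have base : IndepFun (fun ω (i : S) => ξ i ω) (fun ω (i : T) => ξ i ω) ℙ :=
    hindep.indepFun_finset S T hST hmeas
  -- the extension of a tuple to a full sequence
  set y : (S → ℝ) → ℕ → ℝ := fun x i => if h : i ∈ S then x ⟨i, h⟩ else 0 with hy
  have hy_meas : ∀ i, Measurable fun x : S → ℝ => y x i := by
    intro i
    by_cases h : i ∈ S
    · simp only [hy, dif_pos h]; exact measurable_pi_apply _
    · simp only [hy, dif_neg h]; exact measurable_const
  have hsum_meas : ∀ k m : ℕ, Measurable fun x : S → ℝ => ∑ i ∈ Finset.Ico k m, y x i :=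
    fun k m => Finset.measurable_sum _ fun i _ => hy_meas i
  set C : Set (S → ℝ) :=
    {x | ∀ m, m ≤ n → ¬ ∃ k, k < m ∧ τ ≤ ∑ i ∈ Finset.Ico k m, y x i} with hC
  have hC_meas : MeasurableSet C := by
    have : C = ⋂ m ∈ Set.Iic n, ⋂ k ∈ Set.Iio m,
        {x : S → ℝ | ∑ i ∈ Finset.Ico k m, y x i < τ} := by
      ext x
      simp only [hC, Set.mem_setOf_eq, Set.mem_iInter, Set.mem_Iic, Set.mem_Iio,
        not_exists, not_and, not_le]
    rw [this]
    exact MeasurableSet.biInter (Set.to_countable _) fun m _ =>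
      MeasurableSet.biInter (Set.to_countable _) fun k _ =>
        measurableSet_lt (hsum_meas k m) measurable_const
  set Φ : (S → ℝ) → ℝ≥0∞ := C.indicator (fun x =>
    (∑ k ∈ Finset.range n, ENNReal.ofReal (Real.exp (∑ i ∈ Finset.Ico k n, y x i))) + 1)
    with hΦ
  have hΦ_meas : Measurable Φ :=
    Measurable.indicator ((Finset.measurable_sum _ fun k _ =>
      (ENNReal.measurable_ofReal.comp Real.measurable_exp).comp (hsum_meas k n)).add
        measurable_const) hC_meas
  have hnT : n ∈ T := by simp [hT]
  set Ψ : (T → ℝ) → ℝ≥0∞ := fun x => ENNReal.ofReal (Real.exp (x ⟨n, hnT⟩)) with hΨ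
  have hΨ_meas : Measurable Ψ :=
    (ENNReal.measurable_ofReal.comp Real.measurable_exp).comp (measurable_pi_apply _)
  have key := base.comp hΦ_meas hΨ_meas
  have hl : (Φ ∘ fun ω (i : S) => ξ i ω) = (B ξ τ n).indicator (fun ω => R ξ n ω + 1) := by
    funext ω
    have hyval : ∀ (m : ℕ), m ≤ n → ∀ k, (∑ i ∈ Finset.Ico k m, y (fun i : S => ξ i ω) i)
        = ∑ i ∈ Finset.Ico k m, ξ i ω := by
      intro m hm k
      refine Finset.sum_congr rfl fun i hi => ?_
      have hiS : i ∈ S := Finset.mem_range.2 (lt_of_lt_of_le (Finset.mem_Ico.1 hi).2 hm)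
      simp [hy, hiS]
    have hmem : (fun i : S => ξ i ω) ∈ C ↔ ω ∈ B ξ τ n := by
      simp only [hC, Set.mem_setOf_eq, B, cross]
      constructor
      · intro h m hm hc
        obtain ⟨k, hk, hτk⟩ := hc
        exact h m hm ⟨k, hk, by rw [hyval m hm k]; exact hτk⟩
      · intro h m hm hc
        obtain ⟨k, hk, hτk⟩ := hc
        exact h m hm ⟨k, hk, by rw [← hyval m hm k]; exact hτk⟩
    have hval : (∑ k ∈ Finset.range n,
        ENNReal.ofReal (Real.exp (∑ i ∈ Finset.Ico k n, y (fun i : S => ξ i ω) i))) + 1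
        = R ξ n ω + 1 := by
      congr 1
      exact Finset.sum_congr rfl fun k _ => by rw [hyval n le_rfl k]
    simp only [Function.comp_apply, hΦ, Set.indicator_apply]
    by_cases hB : ω ∈ B ξ τ n
    · rw [if_pos (hmem.2 hB), if_pos hB, hval]
    · rw [if_neg (fun hc => hB (hmem.1 hc)), if_neg hB]
  have hr : (Ψ ∘ fun ω (i : T) => ξ i ω) = fun ω => ENNReal.ofReal (Real.exp (ξ n ω)) := rfl
  rwa [hl, hr] at key


section Main
variable [IsProbabilityMeasure (ℙ : Measure Ω)]
  (hmeas : ∀ n, Measurable (ξ n))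
  (hindep : iIndepFun ξ ℙ)
  (hident : ∀ n, IdentDistrib (ξ n) (ξ 0) ℙ ℙ)
  (hmgf : ∫⁻ ω, ENNReal.ofReal (Real.exp (ξ 0 ω)) ≤ 1)

include hmeas hident hmgf in
lemma mgf_le (n : ℕ) : ∫⁻ ω, ENNReal.ofReal (Real.exp (ξ n ω)) ≤ 1 := by
  have h := ((hident n).comp
    (ENNReal.measurable_ofReal.comp Real.measurable_exp)).lintegral_eq
  calc ∫⁻ ω, ENNReal.ofReal (Real.exp (ξ n ω)) ∂ℙ
      = ∫⁻ ω, ENNReal.ofReal (Real.exp (ξ 0 ω)) ∂ℙ := h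
    _ ≤ 1 := hmgf

include hmeas hindep hident hmgf in
lemma step (n : ℕ) :
    ∫⁻ ω in B ξ τ n, R ξ (n + 1) ω ∂ℙ ≤ (∫⁻ ω in B ξ τ n, R ξ n ω ∂ℙ) + ℙ (B ξ τ n) := by
  set g : Ω → ℝ≥0∞ := (B ξ τ n).indicator (fun ω => R ξ n ω + 1) with hg
  set e : Ω → ℝ≥0∞ := fun ω => ENNReal.ofReal (Real.exp (ξ n ω)) with he
  have hg_meas : Measurable g := ((meas_R hmeas n).add measurable_const).indicator (meas_B hmeas n)
  have he_meas : Measurable e := ENNReal.measurable_ofReal.comp (Real.measurable_exp.comp (hmeas n))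
  have h1 : ∫⁻ ω in B ξ τ n, R ξ (n + 1) ω ∂ℙ = ∫⁻ ω, (g * e) ω ∂ℙ := by
    rw [← lintegral_indicator (meas_B hmeas n)]
    congr 1; funext ω
    by_cases hB : ω ∈ B ξ τ n <;> simp [hg, he, Set.indicator, hB, R_succ]
  rw [h1, lintegral_mul_eq_lintegral_mul_lintegral_of_indepFun hg_meas he_meas
    (indep_step hmeas hindep n)]
  calc (∫⁻ ω, g ω ∂ℙ) * ∫⁻ ω, e ω ∂ℙ ≤ (∫⁻ ω, g ω ∂ℙ) * 1 :=
        mul_le_mul_right (mgf_le hmeas hident hmgf n) _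
    _ = ∫⁻ ω in B ξ τ n, (R ξ n ω + 1) ∂ℙ := by
        rw [mul_one, hg, lintegral_indicator (meas_B hmeas n)]
    _ = (∫⁻ ω in B ξ τ n, R ξ n ω ∂ℙ) + ℙ (B ξ τ n) := by
        rw [lintegral_add_right _ measurable_const, setLIntegral_one]

include hmeas hindep hident hmgf in
lemma main_ineq (n : ℕ) :
    (∫⁻ ω in B ξ τ n, R ξ n ω ∂ℙ) + ENNReal.ofReal (Real.exp τ) * (1 - ℙ (B ξ τ n))
      ≤ ∑ m ∈ Finset.range n, ℙ (B ξ τ m) := by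
  induction n with
  | zero =>
    have hB0 : B ξ τ 0 = Set.univ := by
      ext ω; simp [B, cross, Nat.le_zero]
    simp [R, hB0, tsub_self]
  | succ n ih =>
    set eτ := ENNReal.ofReal (Real.exp τ) with heτ
    have hsub : B ξ τ (n + 1) ⊆ B ξ τ n := B_antitone (Nat.le_succ n)
    have hdiff_meas : MeasurableSet (B ξ τ n \ B ξ τ (n + 1)) :=
      (meas_B hmeas n).diff (meas_B hmeas (n + 1))
    have hcrossd : ∀ ω ∈ B ξ τ n \ B ξ τ (n + 1), ω ∈ cross ξ τ (n + 1) := by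
      rintro ω ⟨h1, h2⟩
      simp only [B, Set.mem_setOf_eq, not_forall, not_not] at h2
      obtain ⟨m, hm, hc⟩ := h2
      rcases Nat.lt_succ_iff_lt_or_eq.1 (Nat.lt_succ_of_le hm) with hlt | rfl
      · exact absurd hc (h1 m (Nat.lt_succ_iff.1 hlt))
      · exact hc
    have hdec : ∫⁻ ω in B ξ τ n, R ξ (n + 1) ω ∂ℙ
        = (∫⁻ ω in B ξ τ (n + 1), R ξ (n + 1) ω ∂ℙ)
          + ∫⁻ ω in B ξ τ n \ B ξ τ (n + 1), R ξ (n + 1) ω ∂ℙ := by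
      conv_lhs => rw [show B ξ τ n = B ξ τ (n + 1) ∪ (B ξ τ n \ B ξ τ (n + 1)) from
        (Set.union_diff_cancel hsub).symm]
      exact lintegral_union hdiff_meas Set.disjoint_sdiff_right
    have hlower : eτ * ℙ (B ξ τ n \ B ξ τ (n + 1))
        ≤ ∫⁻ ω in B ξ τ n \ B ξ τ (n + 1), R ξ (n + 1) ω ∂ℙ := by
      rw [← setLIntegral_const]
      exact setLIntegral_mono (meas_R hmeas (n + 1)) fun ω hω => R_ge_cross (hcrossd ω hω)
    have hδ : ℙ (B ξ τ n \ B ξ τ (n + 1)) = ℙ (B ξ τ n) - ℙ (B ξ τ (n + 1)) :=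
      measure_diff hsub (meas_B hmeas (n + 1)).nullMeasurableSet (measure_ne_top _ _)
    have h1mono : 1 - ℙ (B ξ τ (n + 1))
        = (1 - ℙ (B ξ τ n)) + (ℙ (B ξ τ n) - ℙ (B ξ τ (n + 1))) :=
      (tsub_add_tsub_cancel prob_le_one (measure_mono hsub)).symm
    calc (∫⁻ ω in B ξ τ (n+1), R ξ (n+1) ω ∂ℙ) + eτ * (1 - ℙ (B ξ τ (n+1)))
        = ((∫⁻ ω in B ξ τ (n+1), R ξ (n+1) ω ∂ℙ)
            + eτ * ℙ (B ξ τ n \ B ξ τ (n+1))) + eτ * (1 - ℙ (B ξ τ n)) := by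
          rw [h1mono, mul_add, ← hδ]; ring
      _ ≤ ((∫⁻ ω in B ξ τ (n+1), R ξ (n+1) ω ∂ℙ)
            + ∫⁻ ω in B ξ τ n \ B ξ τ (n+1), R ξ (n+1) ω ∂ℙ) + eτ * (1 - ℙ (B ξ τ n)) :=
          add_le_add_left (add_le_add_right hlower _) _
      _ = (∫⁻ ω in B ξ τ n, R ξ (n+1) ω ∂ℙ) + eτ * (1 - ℙ (B ξ τ n)) := by rw [hdec]
      _ ≤ ((∫⁻ ω in B ξ τ n, R ξ n ω ∂ℙ) + ℙ (B ξ τ n)) + eτ * (1 - ℙ (B ξ τ n)) :=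
          add_le_add_left (step hmeas hindep hident hmgf n) _
      _ = ((∫⁻ ω in B ξ τ n, R ξ n ω ∂ℙ) + eτ * (1 - ℙ (B ξ τ n))) + ℙ (B ξ τ n) := by ring
      _ ≤ (∑ m ∈ Finset.range n, ℙ (B ξ τ m)) + ℙ (B ξ τ n) := add_le_add_left ih _
      _ = ∑ m ∈ Finset.range (n+1), ℙ (B ξ τ m) := (Finset.sum_range_succ _ _).symm




include hmeas in
lemma sum_prob_le (n : ℕ) :
    ∑ m ∈ Finset.range n, ℙ (B ξ τ m) ≤ ∫⁻ ω, cusumTime ξ τ ω := by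
  classical
  have hpt : ∀ ω, (∑ m ∈ Finset.range n,
      (B ξ τ m).indicator (fun _ => (1 : ℝ≥0∞)) ω) ≤ cusumTime ξ τ ω := by
    intro ω
    by_cases hex : ∃ m, ω ∈ cross ξ τ m
    · set N := Nat.find hex with hN
      have hspec : ω ∈ cross ξ τ N := Nat.find_spec hex
      have hN1 : 1 ≤ N := by
        rcases Nat.eq_zero_or_pos N with h0 | h1
        · obtain ⟨k, hk, -⟩ := hspec; rw [h0] at hk; exact absurd hk (Nat.not_lt_zero k)
        · exact h1
      have hT : cusumTime ξ τ ω = (N : ℝ≥0∞) := by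
        apply le_antisymm
        · exact sInf_le ⟨N, rfl, hN1, hspec⟩
        · refine le_sInf ?_
          rintro t ⟨m, rfl, hm1, hc⟩
          exact_mod_cast Nat.find_le hc
      rw [hT]
      have hind : ∀ m, (B ξ τ m).indicator (fun _ => (1 : ℝ≥0∞)) ω
          ≤ if m < N then 1 else 0 := by
        intro m
        by_cases h : m < N
        · rw [if_pos h]
          by_cases hB : ω ∈ B ξ τ m <;> simp [Set.indicator, hB]
        · rw [if_neg h]
          push_neg at h
          have hB : ω ∉ B ξ τ m := fun hc => hc N h hspec
          simp [Set.indicator, hB]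
      calc ∑ m ∈ Finset.range n, (B ξ τ m).indicator (fun _ => (1 : ℝ≥0∞)) ω
          ≤ ∑ m ∈ Finset.range n, (if m < N then (1:ℝ≥0∞) else 0) :=
            Finset.sum_le_sum fun m _ => hind m
        _ = ∑ m ∈ (Finset.range n).filter (· < N), (1:ℝ≥0∞) := (Finset.sum_filter _ _).symm
        _ = ((Finset.range n).filter (· < N)).card := by
            rw [Finset.sum_const, nsmul_eq_mul, mul_one]
        _ ≤ (N : ℝ≥0∞) := by
            have hsub : (Finset.range n).filter (· < N) ⊆ Finset.range N := fun m hm =>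
              Finset.mem_range.2 (Finset.mem_filter.1 hm).2
            have := Finset.card_le_card hsub
            rw [Finset.card_range] at this
            exact_mod_cast this
    · have hempty : {t : ℝ≥0∞ | ∃ n : ℕ, t = n ∧ 1 ≤ n ∧
          ∃ k : ℕ, k < n ∧ τ ≤ ∑ i ∈ Finset.Ico k n, ξ i ω} = ∅ := by
        ext t
        simp only [Set.mem_setOf_eq, Set.mem_empty_iff_false, iff_false]
        rintro ⟨m, rfl, hm1, k, hk, hτk⟩
        exact hex ⟨m, k, hk, hτk⟩
      rw [cusumTime, hempty]
      exact le_sInf fun t ht => absurd ht (Set.notMem_empty t)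
  calc ∑ m ∈ Finset.range n, ℙ (B ξ τ m)
      = ∑ m ∈ Finset.range n, ∫⁻ ω, (B ξ τ m).indicator (fun _ => (1:ℝ≥0∞)) ω ∂ℙ := by
        refine Finset.sum_congr rfl fun m _ => ?_
        rw [show ((fun _ => (1:ℝ≥0∞)) : Ω → ℝ≥0∞) = 1 from rfl,
          lintegral_indicator_one (meas_B hmeas m)]
    _ = ∫⁻ ω, ∑ m ∈ Finset.range n, (B ξ τ m).indicator (fun _ => (1:ℝ≥0∞)) ω ∂ℙ :=
        (lintegral_finset_sum _ fun m _ =>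
          measurable_const.indicator (meas_B hmeas m)).symm
    _ ≤ ∫⁻ ω, cusumTime ξ τ ω ∂ℙ := lintegral_mono hpt

include hmeas in
lemma Tinf (ω : Ω) (hω : ω ∈ ⋂ n, B ξ τ n) : cusumTime ξ τ ω = ∞ := by
  have hempty : {t : ℝ≥0∞ | ∃ n : ℕ, t = n ∧ 1 ≤ n ∧
      ∃ k : ℕ, k < n ∧ τ ≤ ∑ i ∈ Finset.Ico k n, ξ i ω} = ∅ := by
    ext t
    simp only [Set.mem_setOf_eq, Set.mem_empty_iff_false, iff_false]
    rintro ⟨m, rfl, hm1, k, hk, hτk⟩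
    exact (Set.mem_iInter.1 hω m) m le_rfl ⟨k, hk, hτk⟩
  rw [cusumTime, hempty]
  exact sInf_empty

end Main
end CusumProof

/-- Theorem on the average run length: if `(ξ_n)` are i.i.d. with
`E[e^{ξ_1}] ≤ 1`, then the CUSUM stopping time with threshold `τ > 0` satisfies
`E[T] ≥ e^τ` (expectation in `[0, ∞]`). -/
theorem cusum_arl_lower_bound {Ω : Type*} [MeasureSpace Ω]
    [IsProbabilityMeasure (ℙ : Measure Ω)]
    (ξ : ℕ → Ω → ℝ) (hmeas : ∀ n, Measurable (ξ n))
    (hindep : iIndepFun ξ ℙ)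
    (hident : ∀ n, IdentDistrib (ξ n) (ξ 0) ℙ ℙ)
    (hmgf : ∫⁻ ω, ENNReal.ofReal (Real.exp (ξ 0 ω)) ≤ 1)
    (τ : ℝ) (hτ : 0 < τ) :
    ENNReal.ofReal (Real.exp τ) ≤ ∫⁻ ω, cusumTime ξ τ ω := by
  classical
  open CusumProof in
  set eτ := ENNReal.ofReal (Real.exp τ) with heτ
  set b : ℕ → ℝ≥0∞ := fun n => ℙ (B ξ τ n) with hb
  have hkey : ∀ n, eτ * (1 - b n) ≤ ∫⁻ ω, cusumTime ξ τ ω := by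
    intro n
    calc eτ * (1 - b n) ≤ (∫⁻ ω in B ξ τ n, R ξ n ω ∂ℙ) + eτ * (1 - b n) := le_add_self
      _ ≤ ∑ m ∈ Finset.range n, ℙ (B ξ τ m) := main_ineq hmeas hindep hident hmgf n
      _ ≤ ∫⁻ ω, cusumTime ξ τ ω := sum_prob_le hmeas n
  by_cases hzero : ℙ (⋂ n, B ξ τ n) = 0
  · -- probability of never crossing is zero
    have htend0 : Tendsto (fun n => ℙ (B ξ τ n)) atTop (𝓝 (ℙ (⋂ n, B ξ τ n))) := by
      have := tendsto_measure_iInter_atTop (μ := (ℙ : Measure Ω)) (s := B ξ τ)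
        (fun n => (meas_B hmeas n).nullMeasurableSet)
        (fun m n h => B_antitone h) ⟨0, measure_ne_top _ _⟩
      exact this
    have htend : Tendsto b atTop (𝓝 0) := by
      rw [hb]; rw [hzero] at htend0; exact htend0
    have h2 : ∀ n, eτ ≤ (∫⁻ ω, cusumTime ξ τ ω) + eτ * b n := by
      intro n
      have hb1 : b n ≤ 1 := prob_le_one
      calc eτ = eτ * ((1 - b n) + b n) := by rw [tsub_add_cancel_of_le hb1, mul_one]
        _ = eτ * (1 - b n) + eτ * b n := by rw [mul_add]
        _ ≤ (∫⁻ ω, cusumTime ξ τ ω) + eτ * b n := add_le_add_left (hkey n) _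
    have htend2 : Tendsto (fun n => (∫⁻ ω, cusumTime ξ τ ω) + eτ * b n) atTop
        (𝓝 ((∫⁻ ω, cusumTime ξ τ ω) + eτ * 0)) :=
      tendsto_const_nhds.add (ENNReal.Tendsto.const_mul htend (Or.inr ENNReal.ofReal_ne_top))
    have := ge_of_tendsto' htend2 h2
    rwa [mul_zero, add_zero] at this
  · -- positive probability of never crossing: the expectation is infinite
    have hs_meas : MeasurableSet (⋂ n, B ξ τ n) := MeasurableSet.iInter fun n => meas_B hmeas n
    have hge : (⋂ n, B ξ τ n).indicator (fun _ => (∞ : ℝ≥0∞)) ≤ cusumTime ξ τ := by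
      intro ω
      by_cases hω : ω ∈ ⋂ n, B ξ τ n
      · rw [Set.indicator_of_mem hω, Tinf hmeas ω hω]
      · rw [Set.indicator_of_notMem hω]; exact zero_le
    have : ∞ ≤ ∫⁻ ω, cusumTime ξ τ ω := by
      calc (∞ : ℝ≥0∞) = ∞ * ℙ (⋂ n, B ξ τ n) := by
            rw [ENNReal.top_mul hzero]
        _ = ∫⁻ ω, (⋂ n, B ξ τ n).indicator (fun _ => (∞ : ℝ≥0∞)) ω ∂ℙ := by
            rw [lintegral_indicator hs_meas, setLIntegral_const]
        _ ≤ ∫⁻ ω, cusumTime ξ τ ω ∂ℙ := lintegral_mono hge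
    exact le_trans le_top this
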